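/- Let A ∈ ℝ^{n×n}. There exists a symmetric positive definite matrix P with P - AᵀPA ⪰ 0 if and only if there exist a symmetric positive definite matrix P and a matrix X ∈ ℝ^{n×n} such that the block matrix [[P, AᵀXᵀ],[XA, X + Xᵀ - P]] ⪰ 0. -/

import Mathlib

open Matrix


variable {n : ℕ}

private lemma dot_tmul (M : Matrix (Fin n) (Fin n) ℝ) (x y : Fin n → ℝ) :
    x ⬝ᵥ (Mᵀ *ᵥ y) = (M *ᵥ x) ⬝ᵥ y := by
  rw [dotProduct_mulVec, vecMul_transpose]

private lemma dot_symm {M : Matrix (Fin n) (Fin n) ℝ} (h : M.IsSymm) (x y : Fin n → ℝ) :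
    x ⬝ᵥ (M *ᵥ y) = y ⬝ᵥ (M *ᵥ x) := by
  conv_lhs => rw [← h.eq]
  rw [dot_tmul, dotProduct_comm]


/-- There is a symmetric `P ≻ 0` with `P - AᵀPA ⪰ 0` iff there are a symmetric
`P ≻ 0` and `X` with `[[P, AᵀXᵀ],[XA, X + Xᵀ - P]] ⪰ 0`. -/
theorem stmt6 {n : ℕ} (A : Matrix (Fin n) (Fin n) ℝ) :
    (∃ P : Matrix (Fin n) (Fin n) ℝ, P.IsSymm ∧ P.PosDef ∧
        (P - Aᵀ * P * A).PosSemidef) ↔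
      (∃ (P : Matrix (Fin n) (Fin n) ℝ) (X : Matrix (Fin n) (Fin n) ℝ),
        P.IsSymm ∧ P.PosDef ∧
        (fromBlocks P (Aᵀ * Xᵀ) (X * A) (X + Xᵀ - P)).PosSemidef) := by
  constructor
  · rintro ⟨P, hs, hpd, hpsd⟩
    refine ⟨P, P, hs, hpd, posSemidef_iff_dotProduct_mulVec.mpr ⟨?_, ?_⟩⟩
    · show _ = _
      rw [conjTranspose_eq_transpose_of_trivial, fromBlocks_transpose]
      simp [hs.eq, Matrix.transpose_mul]
    · intro v
      have hv : v = Sum.elim (v ∘ Sum.inl) (v ∘ Sum.inr) := (Sum.elim_comp_inl_inr v).symm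
      set x := v ∘ Sum.inl
      set y := v ∘ Sum.inr
      rw [hv]
      rw [fromBlocks_mulVec]
      simp only [Sum.elim_comp_inl, Sum.elim_comp_inr, star_trivial,
        sumElim_dotProduct_sumElim, dotProduct_add, add_mulVec, sub_mulVec,
        dotProduct_sub, ← mulVec_mulVec, dot_tmul, hs.eq]
      have key : x ⬝ᵥ P *ᵥ x + (A *ᵥ x) ⬝ᵥ P *ᵥ y +
          (y ⬝ᵥ P *ᵥ A *ᵥ x + (y ⬝ᵥ P *ᵥ y + y ⬝ᵥ P *ᵥ y - y ⬝ᵥ P *ᵥ y)) =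
          (A *ᵥ x + y) ⬝ᵥ P *ᵥ (A *ᵥ x + y) + x ⬝ᵥ (P - Aᵀ * P * A) *ᵥ x := by
        rw [sub_mulVec, dotProduct_sub, ← mulVec_mulVec, ← mulVec_mulVec, dot_tmul,
          mulVec_add, dotProduct_add, add_dotProduct, add_dotProduct,
          dot_symm hs y (A *ᵥ x)]
        ring
      rw [key]
      have h1 := hpd.posSemidef.dotProduct_mulVec_nonneg (A *ᵥ x + y)
      have h2 := hpsd.dotProduct_mulVec_nonneg x
      simp only [star_trivial] at h1 h2
      linarith
  · rintro ⟨P, X, hs, hpd, hpsd⟩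
    refine ⟨P, hs, hpd, posSemidef_iff_dotProduct_mulVec.mpr ⟨?_, ?_⟩⟩
    · show _ = _
      rw [conjTranspose_eq_transpose_of_trivial]
      simp [hs.eq, Matrix.transpose_mul, transpose_sub, mul_assoc]
    · intro x
      have h := hpsd.dotProduct_mulVec_nonneg (Sum.elim x (-(A *ᵥ x)))
      simp only [star_trivial] at h ⊢
      rw [fromBlocks_mulVec] at h
      simp only [Sum.elim_comp_inl, Sum.elim_comp_inr, sumElim_dotProduct_sumElim,
        dotProduct_add, add_mulVec, sub_mulVec, dotProduct_sub, ← mulVec_mulVec,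
        mulVec_neg, dotProduct_neg, neg_dotProduct, dot_tmul, neg_neg] at h
      have e1 : x ⬝ᵥ Aᵀ *ᵥ P *ᵥ A *ᵥ x = (A *ᵥ x) ⬝ᵥ P *ᵥ A *ᵥ x := dot_tmul A x _
      rw [sub_mulVec, dotProduct_sub, ← mulVec_mulVec, ← mulVec_mulVec, e1]
      linarith [h]
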